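/- arXiv:1310.2629 — 4 statements merged into one kernel-verified Lean document; each statement's English description precedes it below -/
import Mathlib

section
/- Let g : ℝ → ℝ be continuous with lim_{|x|→∞} g(x)² = σ² > 0 and K₁² ≤ g(x)² ≤ K₂² for all x, where K₁ > 0. Let Z : [0,∞) → [0,∞) be measurable, and suppose that for every c > 0, (1/t)·∫₀ᵗ 1_{Z(s) ≤ c} ds → 0 as t → ∞. Then (1/t)·∫₀ᵗ g(√(Z(s)))² ds → σ² as t → ∞. -/
open Filter MeasureTheory Set

/-- If `g² → σ² > 0` at infinity, `0 < K₁² ≤ g² ≤ K₂²`, and for every `c > 0` the time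
average of `1_{Z ≤ c}` tends to zero, then the time average of `g(√Z)²` tends to `σ²`. -/
theorem time_average_g_sq (g : ℝ → ℝ) (σ K₁ K₂ : ℝ) (Z : ℝ → ℝ)
    (hgc : Continuous g) (hσ : 0 < σ ^ 2)
    (hlim : Tendsto (fun x => (g x) ^ 2) (Filter.cocompact ℝ) (nhds (σ ^ 2)))
    (hK₁ : 0 < K₁) (hbd : ∀ x, K₁ ^ 2 ≤ (g x) ^ 2 ∧ (g x) ^ 2 ≤ K₂ ^ 2)
    (hZmeas : Measurable Z) (hZpos : ∀ s, 0 ≤ Z s)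
    (h : ∀ c : ℝ, 0 < c → Tendsto (fun t : ℝ =>
        (∫ s in Ioc (0:ℝ) t, if Z s ≤ c then (1:ℝ) else 0) / t) atTop (nhds 0)) :
    Tendsto (fun t : ℝ =>
        (∫ s in Ioc (0:ℝ) t, (g (Real.sqrt (Z s))) ^ 2) / t) atTop (nhds (σ ^ 2)) := by
  have hfm : Measurable (fun s => (g (Real.sqrt (Z s)))^2) :=
    (hgc.measurable.comp hZmeas.sqrt).pow_const 2
  set C : ℝ := K₂^2 + σ^2 with hCdef
  have hC0 : 0 ≤ C := by nlinarith [(hbd 0).1, (hbd 0).2, sq_nonneg K₁]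
  rw [Metric.tendsto_nhds]
  intro ε hε
  have hle : (atTop : Filter ℝ) ≤ cocompact ℝ := by
    rw [cocompact_eq_atBot_atTop]; exact le_sup_right
  have hat : Tendsto (fun x => (g x)^2) atTop (nhds (σ^2)) := hlim.mono_left hle
  obtain ⟨M, hM⟩ := eventually_atTop.1 (Metric.tendsto_nhds.1 hat (ε/2) (by linarith))
  set c : ℝ := (max M 0 + 1)^2 with hcdef
  have hc0 : 0 < c := by positivity
  have hδ : 0 < ε/2/(C+1) := by positivity
  have h3 := Metric.tendsto_nhds.1 (h c hc0) _ hδ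
  filter_upwards [h3, eventually_gt_atTop 0] with t hGt ht
  -- integrability facts on Ioc 0 t
  have hvol : volume (Ioc (0:ℝ) t) ≠ ⊤ := by
    rw [Real.volume_Ioc]; exact ENNReal.ofReal_ne_top
  have hvolval : (volume (Ioc (0:ℝ) t)).toReal = t := by
    rw [Real.volume_Ioc, ENNReal.toReal_ofReal (by linarith)]; ring
  have hindm : Measurable (fun s => if Z s ≤ c then (1:ℝ) else 0) :=
    Measurable.ite (measurableSet_le hZmeas measurable_const) measurable_const measurable_const
  have hindInt : IntegrableOn (fun s => if Z s ≤ c then (1:ℝ) else 0) (Ioc (0:ℝ) t) := by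
    refine Measure.integrableOn_of_bounded (M := 1) hvol hindm.aestronglyMeasurable ?_
    filter_upwards with s
    by_cases hs : Z s ≤ c <;> simp [hs]
  have hfInt : IntegrableOn (fun s => (g (Real.sqrt (Z s)))^2) (Ioc (0:ℝ) t) := by
    refine Measure.integrableOn_of_bounded (M := K₂^2) hvol hfm.aestronglyMeasurable ?_
    filter_upwards with s
    rw [Real.norm_eq_abs, abs_of_nonneg (sq_nonneg _)]
    exact (hbd _).2
  -- pointwise bound
  have hpt : ∀ s, ‖(g (Real.sqrt (Z s)))^2 - σ^2‖ ≤
      C * (if Z s ≤ c then (1:ℝ) else 0) + ε/2 := by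
    intro s
    rw [Real.norm_eq_abs]
    by_cases hs : Z s ≤ c
    · simp only [hs, if_true, mul_one]
      rw [abs_le]
      constructor <;> nlinarith [(hbd (Real.sqrt (Z s))).2, sq_nonneg (g (Real.sqrt (Z s))), hε.le]
    · simp only [hs, if_false, mul_zero, zero_add]
      push_neg at hs
      have hsq : max M 0 + 1 ≤ Real.sqrt (Z s) := by
        rw [show c = (max M 0 + 1)^2 from rfl] at hs
        have := Real.sqrt_le_sqrt hs.le
        rwa [Real.sqrt_sq (by positivity)] at this
      have hMle : M ≤ Real.sqrt (Z s) := by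
        calc M ≤ max M 0 := le_max_left _ _
        _ ≤ max M 0 + 1 := by linarith
        _ ≤ _ := hsq
      have := hM _ hMle
      rw [Real.dist_eq] at this
      linarith
  -- main estimate
  have key : (∫ s in Ioc (0:ℝ) t, (g (Real.sqrt (Z s)))^2) / t - σ^2 =
      (∫ s in Ioc (0:ℝ) t, ((g (Real.sqrt (Z s)))^2 - σ^2)) / t := by
    rw [integral_sub hfInt (integrableOn_const hvol),
      setIntegral_const, measureReal_def, hvolval, smul_eq_mul]
    field_simp
  have bnd : ‖∫ s in Ioc (0:ℝ) t, ((g (Real.sqrt (Z s)))^2 - σ^2)‖ ≤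
      ∫ s in Ioc (0:ℝ) t, (C * (if Z s ≤ c then (1:ℝ) else 0) + ε/2) := by
    refine norm_integral_le_of_norm_le ?_ (ae_of_all _ hpt)
    exact (hindInt.const_mul C).add (integrableOn_const hvol)
  rw [integral_add (hindInt.const_mul C) (integrableOn_const hvol),
    integral_const_mul, setIntegral_const, measureReal_def, hvolval, smul_eq_mul] at bnd
  rw [Real.norm_eq_abs] at bnd
  rw [Real.dist_eq, key]
  rw [Real.dist_eq, sub_zero] at hGt
  set I : ℝ := ∫ s in Ioc (0:ℝ) t, (if Z s ≤ c then (1:ℝ) else 0) with hI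
  have habs : |(∫ s in Ioc (0:ℝ) t, ((g (Real.sqrt (Z s)))^2 - σ^2)) / t| ≤
      (C * I + t * (ε/2)) / t := by
    rw [abs_div, abs_of_pos ht]
    gcongr
  have heq : (C * I + t * (ε/2)) / t = C * (I / t) + ε/2 := by
    field_simp
  have hCd : (C + 1) * (ε/2/(C+1)) = ε/2 := by
    field_simp
  have hfin : C * (I / t) + ε/2 < ε := by
    nlinarith [le_abs_self (I / t), abs_nonneg (I / t), hGt, hCd, hC0, hε]
  calc |(∫ s in Ioc (0:ℝ) t, ((g (Real.sqrt (Z s)))^2 - σ^2)) / t| ≤ C * (I / t) + ε/2 := by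
        rw [← heq]; exact habs
    _ < ε := hfin
end

section
/- Let Z̃ : [0,∞) → [0,∞) be measurable, let θ : [0,∞) → [0,∞) be absolutely continuous and strictly increasing with θ(0) = 0 and derivative θ'(t) = g(√(Z̃(θ(t))))² a.e., where K₁² ≤ g² ≤ K₂² with K₁ > 0. If for some c > 0, lim_{t→∞} (1/t)·∫₀ᵗ 1_{Z̃(u) ≤ c} du = 0, then lim_{t→∞} (1/t)·∫₁ᵗ 1_{Z̃(θ(s)) ≤ c} ds = 0. -/
open Filter MeasureTheory Set

/-- If `θ` is strictly increasing with `θ 0 = 0` and a.e. derivative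
`θ'(t) = g(√(Z̃(θ t)))²` where `0 < K₁² ≤ g² ≤ K₂²`, and the time average of
`1_{Z̃ ≤ c}` tends to zero, then so does the time average of `1_{Z̃(θ(·)) ≤ c}`. -/
theorem time_change_indicator_average (g : ℝ → ℝ) (K₁ K₂ : ℝ) (Ztil θ : ℝ → ℝ)
    (c : ℝ) (hc : 0 < c)
    (hgm : Measurable g) (hK₁ : 0 < K₁)
    (hbd : ∀ x, K₁ ^ 2 ≤ (g x) ^ 2 ∧ (g x) ^ 2 ≤ K₂ ^ 2)
    (hZmeas : Measurable Ztil) (hZpos : ∀ u, 0 ≤ Ztil u)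
    (hθm : StrictMonoOn θ (Ici 0)) (hθ0 : θ 0 = 0)
    (hθac : ∀ a b : ℝ, 0 ≤ a → a ≤ b →
      θ b - θ a = ∫ t in Ioc a b, (g (Real.sqrt (Ztil (θ t)))) ^ 2)
    (hθder : ∀ᵐ t : ℝ, 0 ≤ t →
      HasDerivAt θ ((g (Real.sqrt (Ztil (θ t)))) ^ 2) t)
    (h : Tendsto (fun t : ℝ =>
        (∫ u in Ioc (0:ℝ) t, if Ztil u ≤ c then (1:ℝ) else 0) / t) atTop (nhds 0)) :
    Tendsto (fun t : ℝ =>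
        (∫ s in Ioc (1:ℝ) t, if Ztil (θ s) ≤ c then (1:ℝ) else 0) / t)
      atTop (nhds 0) := by
  classical
  set G : ℝ → ℝ := fun u => if Ztil u ≤ c then (1:ℝ) else 0 with hGdef
  have hGmeas : Measurable G :=
    Measurable.ite (measurableSet_le hZmeas measurable_const) measurable_const measurable_const
  have hG0 : ∀ u, 0 ≤ G u := fun u => by by_cases h' : Ztil u ≤ c <;> simp [hGdef, h']
  have hG1 : ∀ u, G u ≤ 1 := fun u => by by_cases h' : Ztil u ≤ c <;> simp [hGdef, h']
  have hθmono : MonotoneOn θ (Ici 0) := hθm.monotoneOn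
  set ψ : ℝ → ℝ := fun t => θ (max t 0) with hψdef
  have hψmono : Monotone ψ := fun a b hab =>
    hθmono (le_max_right a 0) (le_max_right b 0) (max_le_max hab le_rfl)
  have hψmeas : Measurable ψ := hψmono.measurable
  have hψeq : ∀ t : ℝ, 0 ≤ t → ψ t = θ t := fun t ht => by
    simp [hψdef, max_eq_left ht]
  set H : ℝ → ℝ := fun t => (g (Real.sqrt (Ztil (ψ t))))^2 with hHdef
  have hHmeas : Measurable H :=
    (hgm.comp (Real.continuous_sqrt.measurable.comp (hZmeas.comp hψmeas))).pow_const 2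
  have hH1 : ∀ t, K₁^2 ≤ H t := fun t => (hbd _).1
  have hH2 : ∀ t, H t ≤ K₂^2 := fun t => (hbd _).2
  have hH0 : ∀ t, 0 ≤ H t := fun t => sq_nonneg _
  have hK₁sq : (0:ℝ) < K₁^2 := pow_pos hK₁ 2
  have hHint : ∀ a b : ℝ, IntegrableOn H (Ioc a b) := fun a b =>
    Measure.integrableOn_of_bounded (by simp) hHmeas.aestronglyMeasurable
      (ae_of_all _ fun x => by
        rw [Real.norm_eq_abs, abs_of_nonneg (hH0 x)]; exact hH2 x)
  have hθint : ∀ a b : ℝ, 0 ≤ a → a ≤ b → θ b - θ a = ∫ t in Ioc a b, H t := by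
    intro a b ha hab
    rw [hθac a b ha hab]
    refine setIntegral_congr_fun measurableSet_Ioc (fun x hx => ?_)
    simp only [hHdef]
    rw [hψeq x (le_trans ha (le_of_lt hx.1))]
  have hθub : ∀ a b : ℝ, 0 ≤ a → a ≤ b → θ b - θ a ≤ K₂^2 * (b - a) := by
    intro a b ha hab
    rw [hθint a b ha hab]
    calc ∫ t in Ioc a b, H t ≤ ∫ _t in Ioc a b, K₂^2 :=
          setIntegral_mono_on (hHint a b) (integrableOn_const measure_Ioc_lt_top.ne enorm_ne_top)
            measurableSet_Ioc (fun x _ => hH2 x)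
      _ = K₂^2 * (b - a) := by
          simp [Real.volume_Ioc, ENNReal.toReal_ofReal (sub_nonneg.2 hab), max_eq_left (sub_nonneg.2 hab), mul_comm]
  have hθlb : ∀ a b : ℝ, 0 ≤ a → a ≤ b → K₁^2 * (b - a) ≤ θ b - θ a := by
    intro a b ha hab
    rw [hθint a b ha hab]
    calc K₁^2 * (b - a) = ∫ _t in Ioc a b, K₁^2 := by
          simp [Real.volume_Ioc, ENNReal.toReal_ofReal (sub_nonneg.2 hab), max_eq_left (sub_nonneg.2 hab), mul_comm]
      _ ≤ ∫ t in Ioc a b, H t :=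
          setIntegral_mono_on (integrableOn_const measure_Ioc_lt_top.ne enorm_ne_top) (hHint a b)
            measurableSet_Ioc (fun x _ => hH1 x)
  have hθtop : Tendsto θ atTop atTop := by
    refine tendsto_atTop_mono' atTop ?_ (Tendsto.const_mul_atTop hK₁sq tendsto_id)
    filter_upwards [eventually_ge_atTop (0:ℝ)] with t ht
    have := hθlb 0 t le_rfl ht
    simp only [hθ0, sub_zero] at this
    simpa using this
  -- the key inequality
  have key : ∀ t : ℝ, 1 ≤ t →
      K₁^2 * (∫ s in Ioc (1:ℝ) t, G (θ s)) ≤ ∫ u in Ioc (0:ℝ) (θ t), G u := by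
    intro t ht
    set N : Set ℝ := toMeasurable volume {x : ℝ | ¬ (0 ≤ x →
        HasDerivAt θ ((g (Real.sqrt (Ztil (θ x)))) ^ 2) x)} with hNdef
    have hNnull : volume N = 0 := by
      rw [hNdef, measure_toMeasurable]
      exact hθder
    have hNmeas : MeasurableSet N := measurableSet_toMeasurable _ _
    set s' : Set ℝ := Ioc (1:ℝ) t \ N with hs'def
    have hs'meas : MeasurableSet s' := measurableSet_Ioc.diff hNmeas
    have hs'pos : ∀ x ∈ s', (0:ℝ) ≤ x := fun x hx => le_of_lt (lt_trans one_pos hx.1.1)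
    have hs'der : ∀ x ∈ s', HasDerivWithinAt θ (H x) s' x := by
      intro x hx
      have hxN : x ∉ {x : ℝ | ¬ (0 ≤ x →
          HasDerivAt θ ((g (Real.sqrt (Ztil (θ x)))) ^ 2) x)} :=
        fun hmem => hx.2 (subset_toMeasurable _ _ hmem)
      have hP : HasDerivAt θ ((g (Real.sqrt (Ztil (θ x)))) ^ 2) x := by
        by_contra hcon
        exact hxN (fun hcon2 => absurd (hcon2 (hs'pos x hx)) hcon)
      have hHx : H x = (g (Real.sqrt (Ztil (θ x)))) ^ 2 := by
        simp only [hHdef]; rw [hψeq x (hs'pos x hx)]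
      rw [hHx]
      exact hP.hasDerivWithinAt
    have hinj : InjOn θ s' := hθm.injOn.mono (fun x hx => hs'pos x hx)
    have hcv : ∫ x in θ '' s', G x = ∫ x in s', |H x| • G (θ x) :=
      integral_image_eq_integral_abs_deriv_smul hs'meas hs'der hinj G
    have hGψint : IntegrableOn (fun s => G (ψ s)) (Ioc 1 t) :=
      Measure.integrableOn_of_bounded (by simp) (hGmeas.comp hψmeas).aestronglyMeasurable
        (ae_of_all _ fun x => by
          rw [Real.norm_eq_abs, abs_of_nonneg (hG0 _)]; exact hG1 _)
    have hGHint : IntegrableOn (fun s => G (ψ s) * H s) (Ioc 1 t) :=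
      Measure.integrableOn_of_bounded (M := K₂^2) (by simp)
        ((hGmeas.comp hψmeas).mul hHmeas).aestronglyMeasurable
        (ae_of_all _ fun x => by
          rw [Real.norm_eq_abs, abs_of_nonneg (mul_nonneg (hG0 _) (hH0 _))]
          calc G (ψ x) * H x ≤ 1 * H x :=
                mul_le_mul_of_nonneg_right (hG1 _) (hH0 _)
            _ = H x := one_mul _
            _ ≤ K₂^2 := hH2 x)
    have h3 : s' =ᵐ[volume] Ioc (1:ℝ) t := by
      rw [ae_eq_set]
      constructor
      · exact measure_mono_null (fun x hx => absurd hx.1.1 hx.2) hNnull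
      · exact measure_mono_null
          (fun x hx => Classical.not_not.mp (not_and.mp hx.2 hx.1)) hNnull
    have himg : θ '' s' ⊆ Ioc 0 (θ t) := by
      rintro u ⟨x, hx, rfl⟩
      constructor
      · rw [← hθ0]
        exact hθm (self_mem_Ici) (hs'pos x hx) (lt_trans one_pos hx.1.1)
      · exact hθmono (hs'pos x hx) (le_trans (hs'pos x hx) hx.1.2) hx.1.2
    have hGint2 : IntegrableOn G (Ioc 0 (θ t)) :=
      Measure.integrableOn_of_bounded (by simp) hGmeas.aestronglyMeasurable
        (ae_of_all _ fun x => by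
          rw [Real.norm_eq_abs, abs_of_nonneg (hG0 _)]; exact hG1 _)
    calc K₁^2 * ∫ s in Ioc (1:ℝ) t, G (θ s)
        = ∫ s in Ioc (1:ℝ) t, K₁^2 * G (ψ s) := by
          rw [integral_const_mul]
          congr 1
          refine setIntegral_congr_fun measurableSet_Ioc (fun x hx => ?_)
          rw [hψeq x (le_of_lt (lt_trans one_pos hx.1))]
      _ ≤ ∫ s in Ioc (1:ℝ) t, G (ψ s) * H s := by
          refine setIntegral_mono_on
            (Integrable.const_mul hGψint _) hGHint measurableSet_Ioc (fun x _ => ?_)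
          calc K₁^2 * G (ψ x) = G (ψ x) * K₁^2 := mul_comm _ _
            _ ≤ G (ψ x) * H x := mul_le_mul_of_nonneg_left (hH1 x) (hG0 _)
      _ = ∫ s in s', G (ψ s) * H s := (setIntegral_congr_set h3).symm
      _ = ∫ x in s', |H x| • G (θ x) := by
          refine setIntegral_congr_fun hs'meas (fun x hx => ?_)
          rw [hψeq x (hs'pos x hx), abs_of_nonneg (hH0 x), smul_eq_mul, mul_comm]
      _ = ∫ x in θ '' s', G x := hcv.symm
      _ ≤ ∫ u in Ioc (0:ℝ) (θ t), G u :=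
          setIntegral_mono_set hGint2 (ae_of_all _ fun x => hG0 x)
            (HasSubset.Subset.eventuallyLE himg)
  -- conclude
  have hθ1pos : (0:ℝ) < θ 1 := by
    have := hθlb 0 1 le_rfl zero_le_one
    simp only [hθ0, sub_zero] at this
    nlinarith
  have hK₂sq : (0:ℝ) < K₂^2 := lt_of_lt_of_le hK₁sq (le_trans (hH1 0) (hH2 0))
  have hFcomp : Tendsto ((fun t : ℝ => (∫ u in Ioc (0:ℝ) t, G u) / t) ∘ θ) atTop (nhds 0) :=
    h.comp hθtop
  set C : ℝ := (θ 1 + K₂^2) / K₁^2 with hCdef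
  have hupper : Tendsto (fun t : ℝ => ((∫ u in Ioc (0:ℝ) (θ t), G u) / θ t) * C)
      atTop (nhds 0) := by
    have := hFcomp.mul_const C
    simpa [Function.comp] using this
  show Tendsto (fun t : ℝ => (∫ s in Ioc (1:ℝ) t, G (θ s)) / t) atTop (nhds 0)
  refine squeeze_zero' ?_ ?_ hupper
  · filter_upwards [eventually_ge_atTop (1:ℝ)] with t ht
    exact div_nonneg (setIntegral_nonneg measurableSet_Ioc fun x _ => hG0 _)
      (le_trans zero_le_one ht)
  · filter_upwards [eventually_ge_atTop (1:ℝ)] with t ht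
    have htpos : (0:ℝ) < t := lt_of_lt_of_le one_pos ht
    have hθtpos : (0:ℝ) < θ t := by
      have := hθlb 0 t le_rfl (le_of_lt htpos)
      simp only [hθ0, sub_zero] at this
      nlinarith
    have hθle : θ t ≤ (θ 1 + K₂^2) * t := by
      have h1 := hθub 1 t zero_le_one ht
      nlinarith [hθ1pos]
    have hFθ : 0 ≤ ∫ u in Ioc (0:ℝ) (θ t), G u :=
      setIntegral_nonneg measurableSet_Ioc fun x _ => hG0 _
    have hkey := key t ht
    rw [div_mul_eq_mul_div, div_le_div_iff₀ htpos hθtpos, hCdef]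
    have e1 : (∫ u in Ioc (0:ℝ) (θ t), G u) * ((θ 1 + K₂ ^ 2) / K₁ ^ 2) * t
        = ((∫ u in Ioc (0:ℝ) (θ t), G u) * (θ 1 + K₂ ^ 2) * t) / K₁^2 := by ring
    rw [e1, le_div_iff₀ hK₁sq]
    nlinarith [mul_nonneg hFθ (sub_nonneg.2 hθle),
      mul_le_mul_of_nonneg_right hkey (le_of_lt hθtpos)]
end

section
/- Let δ > 0 and x₀ ≠ 0, and let Z̃ be the squared Bessel process of dimension δ started at x₀², i.e. the solution of dZ̃(t) = δ dt + 2√(Z̃(t)) dW̃(t), Z̃(0) = x₀². Then for every c > 0 there exist constants C > 0 and t₀ > 0 such that P[Z̃(t) ≤ c] ≤ C·t^{-δ/2} for all t ≥ t₀; in particular ∫₁^∞ P[Z̃(e^s − 1) ≤ c] ds < ∞. -/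
open Filter Real Set MeasureTheory

/-- The modified Bessel function of the first kind of index `ν`, defined by its
power series. -/
noncomputable def besselI (ν : ℝ) (x : ℝ) : ℝ :=
  (x / 2) ^ ν * ∑' n : ℕ, (x / 2) ^ (2 * n) / (n.factorial * Real.Gamma (ν + n + 1))

lemma besselI_summable (ν : ℝ) (hν : 0 < ν + 1) (x : ℝ) :
    Summable (fun n : ℕ => (x / 2) ^ (2 * n) / (n.factorial * Real.Gamma (ν + n + 1))) := by
  have hpos : ∀ n : ℕ, (0:ℝ) < ν + n + 1 := fun n => by
    have : (0:ℝ) ≤ (n:ℝ) := Nat.cast_nonneg n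
    linarith
  have hden : ∀ n : ℕ, (0:ℝ) < (n.factorial : ℝ) * Real.Gamma (ν + n + 1) := fun n =>
    mul_pos (by exact_mod_cast n.factorial_pos) (Real.Gamma_pos_of_pos (hpos n))
  set q : ℝ := (x / 2) ^ 2 with hq
  have hq0 : 0 ≤ q := sq_nonneg _
  have hterm : ∀ m : ℕ, (0:ℝ) ≤ (x / 2) ^ (2 * m) / (m.factorial * Real.Gamma (ν + m + 1)) :=
    fun m => div_nonneg (Even.pow_nonneg (even_two_mul m) _) (hden m).le
  apply summable_of_ratio_norm_eventually_le (r := 1/2) (by norm_num)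
  filter_upwards [eventually_ge_atTop ⌈2 * q⌉₊] with n hn
  have hn' : 2 * q ≤ (n:ℝ) := by
    calc 2 * q ≤ (⌈2*q⌉₊ : ℝ) := Nat.le_ceil _
    _ ≤ (n:ℝ) := by exact_mod_cast hn
  rw [Real.norm_of_nonneg (hterm (n+1)), Real.norm_of_nonneg (hterm n)]
  have hΓ : Real.Gamma (ν + (n+1 : ℕ) + 1) = (ν + n + 1) * Real.Gamma (ν + n + 1) := by
    have h : ν + ((n:ℝ)+1) + 1 = (ν + n + 1) + 1 := by ring
    push_cast
    rw [h, Real.Gamma_add_one (ne_of_gt (hpos n))]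
  have hfact : ((n+1).factorial : ℝ) = (n+1) * n.factorial := by
    rw [Nat.factorial_succ]; push_cast; ring
  have hpow : (x/2) ^ (2 * (n+1)) = q * (x/2) ^ (2*n) := by
    rw [hq, show 2 * (n+1) = 2 + 2*n by ring, pow_add]
  rw [hΓ, hfact, hpow]
  set P : ℝ := (x/2)^(2*n) with hPdef
  have hP : 0 ≤ P := Even.pow_nonneg (even_two_mul n) _
  set G : ℝ := (n.factorial : ℝ) * Real.Gamma (ν + n + 1) with hGdef
  have hG : 0 < G := hden n
  set D : ℝ := ((n:ℝ)+1) * (ν + n + 1) with hDdef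
  have hD0 : 0 < D := mul_pos (by positivity) (hpos n)
  have hD : 2 * q ≤ D := by
    have h1 : (n:ℝ) ≤ ν + n + 1 := by linarith
    nlinarith
  have hrw : ((n:ℝ)+1) * (n.factorial:ℝ) * ((ν + n + 1) * Real.Gamma (ν + n + 1)) = D * G := by
    rw [hDdef, hGdef]; ring
  rw [hrw]
  rw [div_le_iff₀ (mul_pos hD0 hG), mul_comm (1/2 : ℝ), mul_one_div, div_div, div_mul_eq_mul_div,
    le_div_iff₀ (by positivity)]
  nlinarith [mul_nonneg (mul_nonneg hP hG.le) (sub_nonneg.2 hD), mul_nonneg hP hG.le]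

lemma besselI_term_nonneg (ν : ℝ) (hν : 0 < ν + 1) (x : ℝ) (n : ℕ) :
    (0:ℝ) ≤ (x / 2) ^ (2 * n) / (n.factorial * Real.Gamma (ν + n + 1)) := by
  have hpos : (0:ℝ) < ν + n + 1 := by
    have : (0:ℝ) ≤ (n:ℝ) := Nat.cast_nonneg n
    linarith
  exact div_nonneg (Even.pow_nonneg (even_two_mul n) _)
    (mul_pos (by exact_mod_cast n.factorial_pos) (Real.Gamma_pos_of_pos hpos)).le

lemma besselI_nonneg (ν : ℝ) (hν : 0 < ν + 1) {x : ℝ} (hx : 0 ≤ x) : 0 ≤ besselI ν x :=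
  mul_nonneg (Real.rpow_nonneg (by linarith) _)
    (tsum_nonneg (besselI_term_nonneg ν hν x))

lemma besselI_le (ν : ℝ) (hν : 0 < ν + 1) {x X : ℝ} (hx : 0 ≤ x) (hX : x ≤ X) :
    besselI ν x ≤ (x / 2) ^ ν *
      ∑' n : ℕ, (X / 2) ^ (2 * n) / (n.factorial * Real.Gamma (ν + n + 1)) := by
  have hmono : ∀ n : ℕ, (x / 2) ^ (2 * n) / (n.factorial * Real.Gamma (ν + n + 1)) ≤
      (X / 2) ^ (2 * n) / (n.factorial * Real.Gamma (ν + n + 1)) := by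
    intro n
    have hpos : (0:ℝ) < ν + n + 1 := by
      have : (0:ℝ) ≤ (n:ℝ) := Nat.cast_nonneg n
      linarith
    have hden : (0:ℝ) < (n.factorial : ℝ) * Real.Gamma (ν + n + 1) :=
      mul_pos (by exact_mod_cast n.factorial_pos) (Real.Gamma_pos_of_pos hpos)
    gcongr
  exact mul_le_mul_of_nonneg_left
    (Summable.tsum_le_tsum hmono
      ((besselI_summable ν hν X).of_nonneg_of_le (besselI_term_nonneg ν hν x) hmono)
      (besselI_summable ν hν X))
    (Real.rpow_nonneg (by linarith) _)

lemma measurable_besselI (ν : ℝ) (hν : 0 < ν + 1) : Measurable (besselI ν) := by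
  apply Measurable.mul
  · fun_prop
  · apply measurable_of_tendsto_metrizable
      (f := fun N x => ∑ n ∈ Finset.range N,
        (x / 2) ^ (2 * n) / (n.factorial * Real.Gamma (ν + n + 1)))
    · intro N
      exact Finset.measurable_sum _ fun n _ => by fun_prop
    · rw [tendsto_pi_nhds]
      intro x
      exact (besselI_summable ν hν x).hasSum.tendsto_sum_nat

lemma bessel_algebra (δ x₀ y t : ℝ) (hx₀ : x₀ ≠ 0) (hy : 0 < y) (ht : 0 < t) :
    1 / (2 * t) * (y / x₀ ^ 2) ^ ((δ / 2 - 1) / 2) * (|x₀| * Real.sqrt y / t / 2) ^ (δ / 2 - 1)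
      = (2 * t) ^ (-(δ / 2)) * y ^ (δ / 2 - 1) := by
  have hx : (0:ℝ) < |x₀| := abs_pos.mpr hx₀
  have hsy : (0:ℝ) < Real.sqrt y := Real.sqrt_pos.mpr hy
  have h2t : (0:ℝ) < 2 * t := by linarith
  have h1 : (0:ℝ) < y / x₀ ^ 2 := div_pos hy (by positivity)
  have h2 : (0:ℝ) < |x₀| * Real.sqrt y / t / 2 := by positivity
  have e1 : 1 / (2 * t) = Real.exp (-(Real.log (2 * t))) := by
    rw [Real.exp_neg, Real.exp_log h2t, one_div]
  rw [e1, Real.rpow_def_of_pos h1, Real.rpow_def_of_pos h2, Real.rpow_def_of_pos hy,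
    Real.rpow_def_of_pos h2t, ← Real.exp_add, ← Real.exp_add, ← Real.exp_add]
  congr 1
  rw [Real.log_div (ne_of_gt hy) (by positivity), Real.log_div (by positivity) (by norm_num),
    Real.log_div (by positivity) (ne_of_gt ht), Real.log_mul (ne_of_gt hx) (ne_of_gt hsy),
    Real.log_mul (by norm_num) (ne_of_gt ht), Real.log_sqrt hy.le, Real.log_pow,
    Real.log_abs]
  push_cast
  ring


/-- If `Z̃` is the squared Bessel process of dimension `δ > 0` started at `x₀² > 0`
(characterised here by its transition density `q_t(x₀²,·)`), then for every `c > 0` we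
have `P[Z̃(t) ≤ c] ≤ C t^{-δ/2}` for large `t`, and `∫₁^∞ P[Z̃(e^s - 1) ≤ c] ds < ∞`. -/
theorem squared_bessel_tail_bound
    {Ω : Type*} [MeasurableSpace Ω] (μ : Measure Ω) [IsProbabilityMeasure μ]
    (δ x₀ : ℝ) (hδ : 0 < δ) (hx₀ : x₀ ≠ 0)
    (Ztil : ℝ → Ω → ℝ) (hZmeas : ∀ t, Measurable (Ztil t))
    (hZpos : ∀ t ω, 0 ≤ Ztil t ω)
    (hdensity : ∀ t : ℝ, 0 < t → ∀ c : ℝ, 0 ≤ c →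
      (μ {ω | Ztil t ω ≤ c}).toReal =
        ∫ y in Ioc (0:ℝ) c,
          (1 / (2 * t)) * (y / x₀ ^ 2) ^ ((δ / 2 - 1) / 2) *
            Real.exp (-(x₀ ^ 2 + y) / (2 * t)) *
              besselI (δ / 2 - 1) (|x₀| * Real.sqrt y / t)) :
    ∀ c : ℝ, 0 < c →
      (∃ C t₀ : ℝ, 0 < C ∧ 0 < t₀ ∧
          ∀ t : ℝ, t₀ ≤ t → (μ {ω | Ztil t ω ≤ c}).toReal ≤ C * t ^ (-(δ / 2))) ∧
        IntegrableOn (fun s : ℝ => (μ {ω | Ztil (Real.exp s - 1) ω ≤ c}).toReal)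
          (Ici (1:ℝ)) := by
  intro c hc
  have hν : 0 < (δ / 2 - 1) + 1 := by linarith
  set X : ℝ := |x₀| * Real.sqrt c with hX_def
  set S₀ : ℝ := ∑' n : ℕ, (X / 2) ^ (2 * n) /
      (n.factorial * Real.Gamma ((δ / 2 - 1) + n + 1)) with hS_def
  have hS₀ : 0 ≤ S₀ := tsum_nonneg (besselI_term_nonneg _ hν X)
  set C : ℝ := max 1 (S₀ * (2:ℝ) ^ (-(δ/2)) * (c ^ (δ/2) / (δ/2))) with hC_def
  have hC1 : (1:ℝ) ≤ C := le_max_left _ _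
  have hCpos : (0:ℝ) < C := lt_of_lt_of_le one_pos hC1
  have key : ∀ t : ℝ, 1 ≤ t →
      (μ {ω | Ztil t ω ≤ c}).toReal ≤ C * t ^ (-(δ/2)) := by
    intro t ht
    have ht0 : (0:ℝ) < t := lt_of_lt_of_le one_pos ht
    rw [hdensity t ht0 c hc.le]
    have hrint : IntegrableOn (fun y : ℝ => y ^ (δ/2 - 1)) (Ioc (0:ℝ) c) := by
      have h := (intervalIntegral.intervalIntegrable_rpow' (a := 0) (b := c)
        (show (-1:ℝ) < δ/2 - 1 by linarith)).1
      exact h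
    have hint : IntegrableOn
        (fun y : ℝ => (2*t) ^ (-(δ/2)) * S₀ * y ^ (δ/2 - 1)) (Ioc (0:ℝ) c) := by
      show Integrable _ (volume.restrict _)
      simpa [mul_assoc] using hrint.const_mul ((2*t) ^ (-(δ/2)) * S₀)
    have hmono : ∀ y ∈ Ioc (0:ℝ) c,
        1 / (2 * t) * (y / x₀ ^ 2) ^ ((δ / 2 - 1) / 2) *
            Real.exp (-(x₀ ^ 2 + y) / (2 * t)) *
              besselI (δ / 2 - 1) (|x₀| * Real.sqrt y / t)
          ≤ (2*t) ^ (-(δ/2)) * S₀ * y ^ (δ/2 - 1) := by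
      intro y hy
      obtain ⟨hy0, hyc⟩ := hy
      have hz0 : (0:ℝ) ≤ |x₀| * Real.sqrt y / t := by positivity
      have hzX : |x₀| * Real.sqrt y / t ≤ X := by
        calc |x₀| * Real.sqrt y / t ≤ |x₀| * Real.sqrt y / 1 := by
              gcongr
        _ = |x₀| * Real.sqrt y := by ring
        _ ≤ |x₀| * Real.sqrt c := by
              gcongr
      have hb := besselI_le _ hν hz0 hzX
      rw [← hS_def] at hb
      have hA : (0:ℝ) ≤ 1 / (2*t) := by positivity
      have hB : (0:ℝ) ≤ (y / x₀ ^ 2) ^ ((δ / 2 - 1) / 2) :=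
        Real.rpow_nonneg (by positivity) _
      have hE0 : (0:ℝ) ≤ Real.exp (-(x₀ ^ 2 + y) / (2 * t)) := (Real.exp_pos _).le
      have hE1 : Real.exp (-(x₀ ^ 2 + y) / (2 * t)) ≤ 1 := by
        rw [Real.exp_le_one_iff]
        apply div_nonpos_of_nonpos_of_nonneg
        · nlinarith [sq_nonneg x₀]
        · linarith
      have hZS : (0:ℝ) ≤ (|x₀| * Real.sqrt y / t / 2) ^ (δ / 2 - 1) * S₀ :=
        mul_nonneg (Real.rpow_nonneg (by positivity) _) hS₀
      calc 1 / (2 * t) * (y / x₀ ^ 2) ^ ((δ / 2 - 1) / 2) *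
            Real.exp (-(x₀ ^ 2 + y) / (2 * t)) *
              besselI (δ / 2 - 1) (|x₀| * Real.sqrt y / t)
          ≤ 1 / (2 * t) * (y / x₀ ^ 2) ^ ((δ / 2 - 1) / 2) *
            Real.exp (-(x₀ ^ 2 + y) / (2 * t)) *
              ((|x₀| * Real.sqrt y / t / 2) ^ (δ / 2 - 1) * S₀) := by
            apply mul_le_mul_of_nonneg_left hb
            positivity
        _ ≤ 1 / (2 * t) * (y / x₀ ^ 2) ^ ((δ / 2 - 1) / 2) * 1 *
              ((|x₀| * Real.sqrt y / t / 2) ^ (δ / 2 - 1) * S₀) := by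
            apply mul_le_mul_of_nonneg_right _ hZS
            exact mul_le_mul_of_nonneg_left hE1 (mul_nonneg hA hB)
        _ = (1 / (2 * t) * (y / x₀ ^ 2) ^ ((δ / 2 - 1) / 2) *
              (|x₀| * Real.sqrt y / t / 2) ^ (δ / 2 - 1)) * S₀ := by ring
        _ = (2*t) ^ (-(δ/2)) * S₀ * y ^ (δ/2 - 1) := by
            rw [bessel_algebra δ x₀ y t hx₀ hy0 ht0]; ring
    have hf0 : ∀ y ∈ Ioc (0:ℝ) c,
        (0:ℝ) ≤ 1 / (2 * t) * (y / x₀ ^ 2) ^ ((δ / 2 - 1) / 2) *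
            Real.exp (-(x₀ ^ 2 + y) / (2 * t)) *
              besselI (δ / 2 - 1) (|x₀| * Real.sqrt y / t) := by
      intro y hy
      obtain ⟨hy0, _⟩ := hy
      apply mul_nonneg
      apply mul_nonneg
      apply mul_nonneg (by positivity) (Real.rpow_nonneg (by positivity) _)
      · exact (Real.exp_pos _).le
      · exact besselI_nonneg _ hν (by positivity)
    have hle : (∫ y in Ioc (0:ℝ) c,
        1 / (2 * t) * (y / x₀ ^ 2) ^ ((δ / 2 - 1) / 2) *
            Real.exp (-(x₀ ^ 2 + y) / (2 * t)) *
              besselI (δ / 2 - 1) (|x₀| * Real.sqrt y / t))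
        ≤ ∫ y in Ioc (0:ℝ) c, (2*t) ^ (-(δ/2)) * S₀ * y ^ (δ/2 - 1) := by
      apply integral_mono_of_nonneg
      · rw [EventuallyLE, ae_restrict_iff' measurableSet_Ioc]
        exact ae_of_all _ hf0
      · exact hint
      · rw [EventuallyLE, ae_restrict_iff' measurableSet_Ioc]
        exact ae_of_all _ hmono
    refine hle.trans ?_
    have hval : (∫ y in Ioc (0:ℝ) c, (2*t) ^ (-(δ/2)) * S₀ * y ^ (δ/2 - 1))
        = (2*t) ^ (-(δ/2)) * S₀ * (c ^ (δ/2) / (δ/2)) := by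
      rw [show (fun y : ℝ => (2*t) ^ (-(δ/2)) * S₀ * y ^ (δ/2 - 1))
          = (fun y : ℝ => ((2*t) ^ (-(δ/2)) * S₀) * y ^ (δ/2 - 1)) by funext y; ring]
      rw [integral_const_mul]
      rw [← intervalIntegral.integral_of_le hc.le,
        integral_rpow (Or.inl (show (-1:ℝ) < δ/2-1 by linarith))]
      rw [show δ/2 - 1 + 1 = δ/2 by ring,
        Real.zero_rpow (show δ/2 ≠ 0 by positivity)]
      ring
    rw [hval]
    have hsplit : (2*t) ^ (-(δ/2)) * S₀ * (c ^ (δ/2) / (δ/2))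
        = (S₀ * (2:ℝ) ^ (-(δ/2)) * (c ^ (δ/2) / (δ/2))) * t ^ (-(δ/2)) := by
      rw [Real.mul_rpow (by norm_num) ht0.le]; ring
    rw [hsplit]
    exact mul_le_mul_of_nonneg_right (le_max_right _ _) (Real.rpow_nonneg ht0.le _)
  refine ⟨⟨C, 1, hCpos, one_pos, fun t ht => key t ht⟩, ?_⟩
  -- integrability part
  set F : ℝ → ℝ → ℝ := fun s y =>
    1 / (2 * (Real.exp s - 1)) * (y / x₀ ^ 2) ^ ((δ / 2 - 1) / 2) *
      Real.exp (-(x₀ ^ 2 + y) / (2 * (Real.exp s - 1))) *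
        besselI (δ / 2 - 1) (|x₀| * Real.sqrt y / (Real.exp s - 1)) with hF_def
  have hFmeas : Measurable (fun p : ℝ × ℝ => F p.1 p.2) := by
    apply Measurable.mul
    · fun_prop
    · exact (measurable_besselI _ hν).comp (by fun_prop)
  have hhsm : StronglyMeasurable
      (fun s : ℝ => ∫ y, F s y ∂(volume.restrict (Ioc (0:ℝ) c))) :=
    hFmeas.stronglyMeasurable.integral_prod_right'
  have hexp2 : ∀ s : ℝ, 1 ≤ s → (1:ℝ) ≤ Real.exp s - 1 := by
    intro s hs
    have := Real.add_one_le_exp s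
    linarith
  have heq : EqOn (fun s : ℝ => (μ {ω | Ztil (Real.exp s - 1) ω ≤ c}).toReal)
      (fun s : ℝ => ∫ y, F s y ∂(volume.restrict (Ioc (0:ℝ) c))) (Ici (1:ℝ)) := by
    intro s hs
    have h1 : (0:ℝ) < Real.exp s - 1 := lt_of_lt_of_le one_pos (hexp2 s hs)
    exact hdensity _ h1 c hc.le
  rw [IntegrableOn, integrable_congr (g := fun s : ℝ => ∫ y, F s y ∂(volume.restrict (Ioc (0:ℝ) c)))
    ((ae_restrict_iff' measurableSet_Ici).2 (ae_of_all _ fun s hs => heq hs))]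
  apply Integrable.mono' (g := fun s : ℝ => (C * (2:ℝ) ^ (δ/2)) * Real.exp (-(δ/2) * s))
  · exact ((integrableOn_Ici_iff_integrableOn_Ioi).2
      (exp_neg_integrableOn_Ioi 1 (by linarith : (0:ℝ) < δ/2))).const_mul _
  · exact hhsm.aestronglyMeasurable.restrict
  · rw [ae_restrict_iff' measurableSet_Ici]
    apply ae_of_all
    intro s hs
    have hs1 : (1:ℝ) ≤ s := hs
    have het : (1:ℝ) ≤ Real.exp s - 1 := hexp2 s hs1
    have hb : (∫ y, F s y ∂(volume.restrict (Ioc (0:ℝ) c)))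
        ≤ C * (Real.exp s - 1) ^ (-(δ/2)) := le_of_eq_of_le (heq hs).symm (key _ het)
    have hpos0 : (0:ℝ) ≤ ∫ y, F s y ∂(volume.restrict (Ioc (0:ℝ) c)) :=
      le_of_le_of_eq ENNReal.toReal_nonneg (heq hs)
    rw [Real.norm_of_nonneg hpos0]
    have he2 : (2:ℝ) ≤ Real.exp s := by
      have := Real.add_one_le_exp s
      linarith
    calc (∫ y, F s y ∂(volume.restrict (Ioc (0:ℝ) c)))
        ≤ C * (Real.exp s - 1) ^ (-(δ/2)) := hb
      _ ≤ C * (Real.exp s / 2) ^ (-(δ/2)) := by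
          apply mul_le_mul_of_nonneg_left _ hCpos.le
          apply Real.rpow_le_rpow_of_nonpos (by positivity) (by linarith) (by linarith)
      _ = (C * (2:ℝ) ^ (δ/2)) * Real.exp (-(δ/2) * s) := by
          rw [Real.div_rpow (Real.exp_pos s).le (by norm_num),
            Real.rpow_def_of_pos (Real.exp_pos s), Real.log_exp,
            Real.rpow_neg (by norm_num : (0:ℝ) ≤ 2)]
          rw [show s * (-(δ/2)) = -(δ/2) * s by ring]
          field_simp
end

section
/- Let (F_c(t))_{t ≥ 1} be a family of nonnegative random variables of the form F_c(t) = e^{-t}∫₁ᵗ e^s·1_{A(s)} ds where s ↦ 1_{A(s)}(ω) is measurable and {A(s)} are events with s ↦ P[A(s)] continuous and integrable on [1,∞). Then F_c(t) → 0 almost surely as t → ∞. -/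
open Filter Real Set MeasureTheory

lemma aux_exp_avg_tendsto {f : ℝ → ℝ} (hmeas : Measurable f) (h0 : ∀ s, 0 ≤ f s)
    (h1 : ∀ s, f s ≤ 1) (hint : IntegrableOn f (Ici 1)) :
    Tendsto (fun t : ℝ => Real.exp (-t) * ∫ s in Ioc (1:ℝ) t, Real.exp s * f s)
      atTop (nhds 0) := by
  have hg : ∀ a b : ℝ, IntegrableOn (fun s => Real.exp s * f s) (Ioc a b) := by
    intro a b
    refine Integrable.mono' (g := fun _ => Real.exp b)
      (integrableOn_const measure_Ioc_lt_top.ne)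
      ((Real.measurable_exp.mul hmeas).aestronglyMeasurable) ?_
    filter_upwards [ae_restrict_mem measurableSet_Ioc] with s hs
    rw [Real.norm_eq_abs, abs_mul, abs_of_nonneg (Real.exp_pos s).le,
      abs_of_nonneg (h0 s)]
    calc Real.exp s * f s ≤ Real.exp b * 1 := by
          apply mul_le_mul (Real.exp_le_exp.2 hs.2) (h1 s) (h0 s) (Real.exp_pos b).le
      _ = Real.exp b := mul_one _
  have hioi : ∀ T : ℝ, 1 ≤ T → IntegrableOn f (Ioi T) := by
    intro T hT
    exact hint.mono_set (fun x hx => hT.trans hx.le)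
  -- tail integrals tend to zero
  have htail : Tendsto (fun T : ℝ => ∫ s in Ioi T, f s) atTop (nhds 0) := by
    have h2 := MeasureTheory.intervalIntegral_tendsto_integral_Ioi 1 (hioi 1 le_rfl)
      (tendsto_id (α := ℝ))
    have heq : ∀ᶠ T in atTop, (∫ s in Ioi (1:ℝ), f s) - ∫ s in (1:ℝ)..T, f s
        = ∫ s in Ioi T, f s := by
      filter_upwards [eventually_ge_atTop (1:ℝ)] with T hT
      rw [intervalIntegral.integral_of_le hT]
      have hsplit : (∫ s in Ioi (1:ℝ), f s)
          = (∫ s in Ioc (1:ℝ) T, f s) + ∫ s in Ioi T, f s := by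
        rw [← setIntegral_union (Ioc_disjoint_Ioi le_rfl) measurableSet_Ioi
          ((hioi 1 le_rfl).mono_set Ioc_subset_Ioi_self) (hioi T hT)]
        rw [Ioc_union_Ioi_eq_Ioi hT]
      rw [hsplit]; ring
    have := (tendsto_const_nhds.sub h2).congr' heq
    simpa using this
  rw [Metric.tendsto_atTop]
  intro ε hε
  -- choose T with tail < ε/2
  obtain ⟨T, hT1, hTtail⟩ : ∃ T : ℝ, 1 ≤ T ∧ (∫ s in Ioi T, f s) < ε / 2 := by
    have := (htail.eventually (gt_mem_nhds (by linarith : (0:ℝ) < ε/2))).and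
      (eventually_ge_atTop (1:ℝ))
    rcases this.exists with ⟨T, h1', h2'⟩
    exact ⟨T, h2', h1'⟩
  set C := ∫ s in Ioc (1:ℝ) T, Real.exp s * f s with hC
  have hCpos : 0 ≤ C := setIntegral_nonneg measurableSet_Ioc
    (fun s _ => mul_nonneg (Real.exp_pos s).le (h0 s))
  have hdecay : Tendsto (fun t : ℝ => Real.exp (-t) * C) atTop (nhds 0) := by
    simpa using (Real.tendsto_exp_neg_atTop_nhds_zero.mul_const C)
  obtain ⟨N, hN⟩ : ∃ N : ℝ, ∀ t ≥ N, Real.exp (-t) * C < ε / 2 ∧ T ≤ t := by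
    exact eventually_atTop.1
      ((hdecay.eventually (gt_mem_nhds (by linarith : (0:ℝ) < ε/2))).and
        (eventually_ge_atTop T))
  refine ⟨N, fun t ht => ?_⟩
  obtain ⟨hdec, hTt⟩ := hN t ht
  have ht1 : (1:ℝ) ≤ t := hT1.trans hTt
  have hFnonneg : 0 ≤ Real.exp (-t) * ∫ s in Ioc (1:ℝ) t, Real.exp s * f s :=
    mul_nonneg (Real.exp_pos _).le (setIntegral_nonneg measurableSet_Ioc
      (fun s _ => mul_nonneg (Real.exp_pos s).le (h0 s)))
  rw [Real.dist_eq, sub_zero, abs_of_nonneg hFnonneg]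
  have hsplit : (∫ s in Ioc (1:ℝ) t, Real.exp s * f s)
      = C + ∫ s in Ioc T t, Real.exp s * f s := by
    rw [hC, ← setIntegral_union (Set.Ioc_disjoint_Ioc_of_le le_rfl) measurableSet_Ioc
      (hg 1 T) (hg T t), Ioc_union_Ioc_eq_Ioc hT1 hTt]
  have hbound2 : Real.exp (-t) * ∫ s in Ioc T t, Real.exp s * f s
      ≤ ∫ s in Ioi T, f s := by
    rw [← integral_const_mul]
    calc (∫ s in Ioc T t, Real.exp (-t) * (Real.exp s * f s))
        ≤ ∫ s in Ioc T t, f s := by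
          refine setIntegral_mono_on ((hg T t).const_mul _)
            ((hioi T hT1).mono_set Ioc_subset_Ioi_self) measurableSet_Ioc ?_
          intro s hs
          rw [← mul_assoc, ← Real.exp_add]
          calc Real.exp (-t + s) * f s ≤ 1 * f s :=
                mul_le_mul_of_nonneg_right
                  (Real.exp_le_one_iff.2 (by linarith [hs.2])) (h0 s)
            _ = f s := one_mul _
      _ ≤ ∫ s in Ioi T, f s := by
          refine setIntegral_mono_set (hioi T hT1) ?_
            (HasSubset.Subset.eventuallyLE Ioc_subset_Ioi_self)
          filter_upwards with s using h0 s
  calc Real.exp (-t) * ∫ s in Ioc (1:ℝ) t, Real.exp s * f s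
      = Real.exp (-t) * C + Real.exp (-t) * ∫ s in Ioc T t, Real.exp s * f s := by
        rw [hsplit]; ring
    _ < ε / 2 + ε / 2 := by
        apply add_lt_add_of_lt_of_le hdec (hbound2.trans hTtail.le)
    _ = ε := by ring


/-- If `{A(s)}` is a jointly measurable family of events with `s ↦ P[A(s)]` continuous
and integrable on `[1,∞)`, then `F_c(t) = e^{-t} ∫₁ᵗ e^s 1_{A(s)} ds → 0` a.s. -/
theorem exp_weighted_indicator_average_tendsto_zero
    {Ω : Type*} [MeasurableSpace Ω] (μ : Measure Ω) [IsProbabilityMeasure μ]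
    (A : ℝ → Set Ω)
    (hAmeas : MeasurableSet {p : ℝ × Ω | p.2 ∈ A p.1})
    (hAcont : ContinuousOn (fun s : ℝ => (μ (A s)).toReal) (Ici 1))
    (hAint : IntegrableOn (fun s : ℝ => (μ (A s)).toReal) (Ici 1)) :
    ∀ᵐ ω ∂μ, Tendsto (fun t : ℝ => Real.exp (-t) *
        ∫ s in Ioc (1:ℝ) t, Real.exp s * (A s).indicator (fun _ => (1:ℝ)) ω)
      atTop (nhds 0) := by
  set ν : Measure ℝ := volume.restrict (Ici 1) with hν
  set F : ℝ × Ω → ENNReal := Set.indicator {p : ℝ × Ω | p.2 ∈ A p.1} 1 with hF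
  have hFmeas : Measurable F := measurable_one.indicator hAmeas
  have hAsec : ∀ s : ℝ, MeasurableSet (A s) := by
    intro s
    exact measurable_prodMk_left hAmeas
  have hBsec : ∀ ω : Ω, MeasurableSet {s : ℝ | ω ∈ A s} := by
    intro ω
    exact measurable_prodMk_right hAmeas
  -- Tonelli
  have hswap : ∫⁻ ω, (∫⁻ s, F (s, ω) ∂ν) ∂μ = ∫⁻ s, (∫⁻ ω, F (s, ω) ∂μ) ∂ν := by
    exact (lintegral_lintegral_swap (μ := ν) (ν := μ) (f := fun s ω => F (s, ω))
      hFmeas.aemeasurable).symm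
  have hinner : ∀ s : ℝ, (∫⁻ ω, F (s, ω) ∂μ) = μ (A s) := by
    intro s
    have heq : ∀ ω', F (s, ω') = (A s).indicator 1 ω' := by
      intro ω'
      by_cases h : ω' ∈ A s
      · rw [hF, Set.indicator_of_mem (show (s, ω') ∈ {p : ℝ × Ω | p.2 ∈ A p.1} from h),
          Set.indicator_of_mem h]
        rfl
      · rw [hF, Set.indicator_of_notMem (show (s, ω') ∉ {p : ℝ × Ω | p.2 ∈ A p.1} from h),
          Set.indicator_of_notMem h]
    rw [lintegral_congr heq, lintegral_indicator_one (hAsec s)]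
  have hfin : (∫⁻ ω, (∫⁻ s, F (s, ω) ∂ν) ∂μ) < ⊤ := by
    rw [hswap]
    have h1 : (∫⁻ s, (∫⁻ ω, F (s, ω) ∂μ) ∂ν) = ∫⁻ s, μ (A s) ∂ν :=
      lintegral_congr (fun s => hinner s)
    rw [h1]
    have h2 : (∫⁻ s, μ (A s) ∂ν) ≤ ∫⁻ s, ‖(μ (A s)).toReal‖₊ ∂ν := by
      refine lintegral_mono (fun s => ?_)
      rw [← enorm_eq_nnnorm, Real.enorm_eq_ofReal_abs, abs_of_nonneg ENNReal.toReal_nonneg,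
        ENNReal.ofReal_toReal (measure_ne_top μ (A s))]
    exact lt_of_le_of_lt h2 hAint.2
  have hae : ∀ᵐ ω ∂μ, (∫⁻ s, F (s, ω) ∂ν) < ⊤ := by
    refine ae_lt_top ?_ hfin.ne
    exact Measurable.lintegral_prod_left hFmeas
  filter_upwards [hae] with ω hω
  set f : ℝ → ℝ := Set.indicator {s : ℝ | ω ∈ A s} (fun _ => (1:ℝ)) with hf
  have hfeq : ∀ s, f s = (A s).indicator (fun _ => (1:ℝ)) ω := by
    intro s
    by_cases h : ω ∈ A s
    · rw [hf, Set.indicator_of_mem (show s ∈ {s : ℝ | ω ∈ A s} from h),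
        Set.indicator_of_mem h]
    · rw [hf, Set.indicator_of_notMem (show s ∉ {s : ℝ | ω ∈ A s} from h),
        Set.indicator_of_notMem h]
  have hfmeas : Measurable f := measurable_const.indicator (hBsec ω)
  have hf0 : ∀ s, 0 ≤ f s := fun s => Set.indicator_nonneg (fun _ _ => zero_le_one) s
  have hf1 : ∀ s, f s ≤ 1 := by
    intro s
    rw [hfeq s]
    by_cases h : ω ∈ A s
    · rw [Set.indicator_of_mem h]
    · rw [Set.indicator_of_notMem h]; norm_num
  have hfint : IntegrableOn f (Ici 1) := by
    refine ⟨hfmeas.aestronglyMeasurable, ?_⟩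
    show (∫⁻ s, ‖f s‖₊ ∂ν) < ⊤
    have : (∫⁻ s, ‖f s‖₊ ∂ν) = ∫⁻ s, F (s, ω) ∂ν := by
      refine lintegral_congr (fun s => ?_)
      by_cases h : ω ∈ A s
      · rw [hf, hF, Set.indicator_of_mem (show s ∈ {s : ℝ | ω ∈ A s} from h),
          Set.indicator_of_mem (show (s, ω) ∈ {p : ℝ × Ω | p.2 ∈ A p.1} from h)]
        simp
      · rw [hf, hF, Set.indicator_of_notMem (show s ∉ {s : ℝ | ω ∈ A s} from h),
          Set.indicator_of_notMem (show (s, ω) ∉ {p : ℝ × Ω | p.2 ∈ A p.1} from h)]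
        simp
    rw [this]; exact hω
  have := aux_exp_avg_tendsto hfmeas hf0 hf1 hfint
  refine this.congr (fun t => ?_)
  exact congrArg (fun x => Real.exp (-t) * x)
    (setIntegral_congr_fun measurableSet_Ioc (fun s _ => by rw [hfeq s]))
end
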